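/- Let A be a commutative local ring with maximal ideal m in which 2 is invertible (2 ∉ m). Let y ∈ A satisfy 1 + y + y² + y³ + y⁴ = 0 and y − 1 ∈ m. Let u ∈ A⟦t⟧ be a power series with u² = t² + y whose constant coefficient is congruent to 1 modulo m (so u is a unit of A⟦t⟧), and set σ := t·u⁻¹ ∈ A⟦t⟧. Then the five-fold composite σ ∘ σ ∘ σ ∘ σ ∘ σ (under substitution of power series) equals t; that is, σ has order dividing 5 under composition. -/

import Mathlib

open PowerSeries

/-- Substitution (composition) of formal power series: `pscomp f g` is `f ∘ g`,
i.e. the series `∑ₖ fₖ gᵏ`, whose `n`-th coefficient is the (finitely supported,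
when the constant coefficient of `g` is nilpotent) sum `∑ᶠ k, fₖ · (coeff n gᵏ)`. -/
noncomputable def pscomp {A : Type*} [CommRing A] (f g : PowerSeries A) : PowerSeries A :=
  PowerSeries.mk fun n => ∑ᶠ k : ℕ, (coeff k f) * (coeff n (g ^ k))

section PscompLemmas

variable {A : Type*} [CommRing A]

lemma coeff_pow_eq_zero' {g : PowerSeries A} (hg : constantCoeff g = 0)
    {n k : ℕ} (h : n < k) : coeff n (g ^ k) = 0 := by
  have hdvd : (X : PowerSeries A) ^ k ∣ g ^ k :=
    pow_dvd_pow_of_dvd (PowerSeries.X_dvd_iff.2 hg) k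
  exact PowerSeries.X_pow_dvd_iff.1 hdvd n h

lemma coeff_pscomp' {f g : PowerSeries A} (hg : constantCoeff g = 0) (n : ℕ) :
    coeff n (pscomp f g)
      = ∑ k ∈ Finset.range (n + 1), coeff k f * coeff n (g ^ k) := by
  rw [pscomp, coeff_mk]
  apply finsum_eq_finset_sum_of_support_subset
  intro k hk
  simp only [Function.mem_support] at hk
  simp only [Finset.coe_range, Set.mem_Iio]
  by_contra h
  push_neg at h
  exact hk (by rw [coeff_pow_eq_zero' hg (by omega), mul_zero])

lemma pscomp_X' {g : PowerSeries A} (hg : constantCoeff g = 0) :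
    pscomp X g = g := by
  ext n
  rw [pscomp, coeff_mk, finsum_eq_single _ 1 fun j hj => by
    rw [PowerSeries.coeff_X, if_neg hj, zero_mul]]
  simp

lemma pscomp_C' (a : A) (g : PowerSeries A) : pscomp (C a) g = C a := by
  ext n
  rw [pscomp, coeff_mk, finsum_eq_single _ 0 fun j hj => by
    rw [PowerSeries.coeff_C, if_neg hj, zero_mul]]
  simp [PowerSeries.coeff_C, PowerSeries.coeff_one]

lemma pscomp_mul' {f₁ f₂ g : PowerSeries A} (hg : constantCoeff g = 0) :
    pscomp (f₁ * f₂) g = pscomp f₁ g * pscomp f₂ g := by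
  classical
  ext n
  set a : ℕ → A := fun i => coeff i f₁ with ha
  set b : ℕ → A := fun j => coeff j f₂ with hb
  set c : ℕ → A := fun k => coeff n (g ^ k) with hc
  set F : ℕ × ℕ → A := fun p => a p.1 * b p.2 * c (p.1 + p.2) with hF
  set s' : Finset (ℕ × ℕ) :=
    (Finset.range (n + 1) ×ˢ Finset.range (n + 1)).filter (fun p => p.1 + p.2 ≤ n) with hs'
  have hfib : ∀ k ∈ Finset.range (n + 1),
      s'.filter (fun p => p.1 + p.2 = k) = Finset.HasAntidiagonal.antidiagonal k := by
    intro k hk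
    rw [Finset.mem_range] at hk
    ext p
    simp only [hs', Finset.mem_filter, Finset.mem_product, Finset.mem_range,
      Finset.HasAntidiagonal.mem_antidiagonal]
    omega
  have hLHS : coeff n (pscomp (f₁ * f₂) g) = ∑ p ∈ s', F p := by
    rw [coeff_pscomp' hg,
      ← Finset.sum_fiberwise_of_maps_to (g := fun p : ℕ × ℕ => p.1 + p.2)
        (t := Finset.range (n + 1))
        (fun p hp => by
          simp only [hs', Finset.mem_filter] at hp
          exact Finset.mem_range.2 (Nat.lt_succ_of_le hp.2)) F]
    refine Finset.sum_congr rfl fun k hk => ?_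
    rw [hfib k hk, PowerSeries.coeff_mul, Finset.sum_mul]
    refine Finset.sum_congr rfl fun p hp => ?_
    rw [Finset.HasAntidiagonal.mem_antidiagonal] at hp
    simp only [hF, hp]
    rfl
  have hcoeff_le : ∀ (f : PowerSeries A) (p : ℕ), p ≤ n →
      coeff p (pscomp f g)
        = ∑ i ∈ Finset.range (n + 1), coeff i f * coeff p (g ^ i) := by
    intro f p hp
    rw [coeff_pscomp' hg]
    refine Finset.sum_subset (Finset.range_subset_range.2 (by omega)) fun i _ hi => ?_
    have hpi : p < i := by simp only [Finset.mem_range, not_lt] at hi; omega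
    rw [coeff_pow_eq_zero' hg hpi, mul_zero]
  have hRHS : coeff n (pscomp f₁ g * pscomp f₂ g) = ∑ p ∈ s', F p := by
    rw [PowerSeries.coeff_mul]
    have step1 : ∑ p ∈ Finset.HasAntidiagonal.antidiagonal n,
        coeff p.1 (pscomp f₁ g) * coeff p.2 (pscomp f₂ g)
        = ∑ p ∈ Finset.HasAntidiagonal.antidiagonal n, ∑ i ∈ Finset.range (n + 1),
            ∑ j ∈ Finset.range (n + 1),
              (a i * coeff p.1 (g ^ i)) * (b j * coeff p.2 (g ^ j)) := by
      refine Finset.sum_congr rfl fun p hp => ?_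
      rw [Finset.HasAntidiagonal.mem_antidiagonal] at hp
      rw [hcoeff_le f₁ p.1 (by omega), hcoeff_le f₂ p.2 (by omega),
        Finset.sum_mul_sum]
    rw [step1, Finset.sum_comm]
    have step2 : ∀ i ∈ Finset.range (n + 1),
        ∑ p ∈ Finset.HasAntidiagonal.antidiagonal n, ∑ j ∈ Finset.range (n + 1),
            (a i * coeff p.1 (g ^ i)) * (b j * coeff p.2 (g ^ j))
        = ∑ j ∈ Finset.range (n + 1), F (i, j) := by
      intro i _
      rw [Finset.sum_comm]
      refine Finset.sum_congr rfl fun j _ => ?_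
      have : ∑ p ∈ Finset.HasAntidiagonal.antidiagonal n,
          (a i * coeff p.1 (g ^ i)) * (b j * coeff p.2 (g ^ j))
          = a i * b j * ∑ p ∈ Finset.HasAntidiagonal.antidiagonal n,
              coeff p.1 (g ^ i) * coeff p.2 (g ^ j) := by
        rw [Finset.mul_sum]
        exact Finset.sum_congr rfl fun p _ => by ring
      rw [this, ← PowerSeries.coeff_mul, ← pow_add]
    rw [Finset.sum_congr rfl step2]
    rw [← Finset.sum_product']
    symm
    apply Finset.sum_subset
    · intro p hp
      simp only [hs', Finset.mem_filter] at hp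
      exact hp.1
    · intro p _ hp
      simp only [hs', Finset.mem_filter, Finset.mem_product, Finset.mem_range] at hp
      push_neg at hp
      rcases Nat.lt_or_ge n (p.1 + p.2) with h | h
      · have : c (p.1 + p.2) = 0 := coeff_pow_eq_zero' hg h
        simp only [hF, this, mul_zero]
      · exact absurd h (by
          intro hle
          exact absurd (hp (by
            constructor <;> omega)) (by omega))
  rw [hLHS, hRHS]

lemma pscomp_add' {f₁ f₂ g : PowerSeries A} (hg : constantCoeff g = 0) :
    pscomp (f₁ + f₂) g = pscomp f₁ g + pscomp f₂ g := by
  ext n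
  rw [map_add, coeff_pscomp' hg, coeff_pscomp' hg, coeff_pscomp' hg,
    ← Finset.sum_add_distrib]
  exact Finset.sum_congr rfl fun k _ => by rw [map_add, add_mul]

lemma constantCoeff_pscomp' {f g : PowerSeries A} (hg : constantCoeff g = 0) :
    constantCoeff (pscomp f g) = constantCoeff f := by
  rw [← PowerSeries.coeff_zero_eq_constantCoeff_apply, coeff_pscomp' hg]
  simp

end PscompLemmas

section LocalLemmas

variable {A : Type*} [CommRing A] [IsLocalRing A]

lemma isUnit_of_sub_mem {x z : A} (hz : IsUnit z)
    (h : x - z ∈ IsLocalRing.maximalIdeal A) : IsUnit x := by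
  by_contra hx
  have hxm : x ∈ IsLocalRing.maximalIdeal A :=
    (IsLocalRing.mem_maximalIdeal x).2 hx
  have hzm : z ∈ IsLocalRing.maximalIdeal A := by
    have := Ideal.sub_mem _ hxm h
    simpa using this
  exact ((IsLocalRing.mem_maximalIdeal z).1 hzm) hz

lemma psstep {y : A} {u s σ w : PowerSeries A} {a b : A}
    (hu : u ^ 2 = X ^ 2 + C y) (hσ : σ * u = X)
    (hσ0 : constantCoeff σ = 0)
    (hu0 : constantCoeff u - 1 ∈ IsLocalRing.maximalIdeal A)
    (hs0 : constantCoeff s = 0) (hsw : s * w = X)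
    (hw : w ^ 2 = C a * X ^ 2 + C b)
    (hwm : constantCoeff w - 1 ∈ IsLocalRing.maximalIdeal A) :
    constantCoeff (pscomp σ s) = 0 ∧
    pscomp σ s * (pscomp u s * w) = X ∧
    (pscomp u s * w) ^ 2 = C (1 + y * a) * X ^ 2 + C (y * b) ∧
    constantCoeff (pscomp u s * w) - 1 ∈ IsLocalRing.maximalIdeal A := by
  refine ⟨?_, ?_, ?_, ?_⟩
  · rw [constantCoeff_pscomp' hs0, hσ0]
  · rw [← mul_assoc, ← pscomp_mul' hs0, hσ, pscomp_X' hs0, hsw]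
  · have h1 : pscomp (u ^ 2) s = (pscomp u s) ^ 2 := by
      rw [pow_two, pow_two, pscomp_mul' hs0]
    have h2 : pscomp (u ^ 2) s = s ^ 2 + C y := by
      rw [hu, pscomp_add' hs0, pow_two, pscomp_mul' hs0, pscomp_X' hs0,
        pscomp_C', pow_two]
    calc (pscomp u s * w) ^ 2 = pscomp (u ^ 2) s * w ^ 2 := by rw [h1]; ring
      _ = (s * w) ^ 2 + C y * w ^ 2 := by rw [h2]; ring
      _ = X ^ 2 + C y * (C a * X ^ 2 + C b) := by rw [hsw, hw]
      _ = C (1 + y * a) * X ^ 2 + C (y * b) := by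
          rw [map_add, map_mul, map_one, map_mul]; ring
  · rw [map_mul, constantCoeff_pscomp' hs0]
    have heq : constantCoeff u * constantCoeff w - 1
        = (constantCoeff u - 1) * constantCoeff w
          + (constantCoeff w - 1) := by ring
    rw [heq]
    exact Ideal.add_mem _ (Ideal.mul_mem_right _ _ hu0) hwm

end LocalLemmas

theorem sigma_has_order_dividing_five {A : Type*} [CommRing A] [IsLocalRing A]
    (h2 : IsUnit (2 : A)) (y : A)
    (hy : 1 + y + y ^ 2 + y ^ 3 + y ^ 4 = 0)
    (hym : y - 1 ∈ IsLocalRing.maximalIdeal A)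
    (u σ : PowerSeries A) (hu : u ^ 2 = X ^ 2 + C y)
    (hu0 : constantCoeff u - 1 ∈ IsLocalRing.maximalIdeal A)
    (hσ : σ * u = X) :
    pscomp σ (pscomp σ (pscomp σ (pscomp σ σ))) = X := by
  have huu : IsUnit (constantCoeff u) := isUnit_of_sub_mem isUnit_one (by simpa using hu0)
  have hσ0 : constantCoeff σ = 0 := by
    have h0 : constantCoeff σ * constantCoeff u = 0 := by
      have := congrArg (constantCoeff) hσ
      simpa using this
    exact (huu.mul_left_eq_zero).1 h0
  have hw1 : u ^ 2 = C 1 * X ^ 2 + C y := by rw [map_one, one_mul]; exact hu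
  obtain ⟨h20, h2w, h2sq, h2m⟩ := psstep hu hσ hσ0 hu0 hσ0 hσ hw1 hu0
  obtain ⟨h30, h3w, h3sq, h3m⟩ := psstep hu hσ hσ0 hu0 h20 h2w h2sq h2m
  obtain ⟨h40, h4w, h4sq, h4m⟩ := psstep hu hσ hσ0 hu0 h30 h3w h3sq h3m
  obtain ⟨h50, h5w, h5sq, h5m⟩ := psstep hu hσ hσ0 hu0 h40 h4w h4sq h4m
  set s5 := pscomp σ (pscomp σ (pscomp σ (pscomp σ σ))) with hs5
  set w5 := pscomp u (pscomp σ (pscomp σ (pscomp σ σ)))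
      * (pscomp u (pscomp σ (pscomp σ σ))
      * (pscomp u (pscomp σ σ) * (pscomp u σ * u))) with hw5def
  have ha5 : (1 + y * (1 + y * (1 + y * (1 + y * 1)))) = 0 := by linear_combination hy
  have hb5 : y * (y * (y * (y * y))) = 1 := by linear_combination (y - 1) * hy
  have hsq1 : w5 ^ 2 = 1 := by
    rw [h5sq, ha5, hb5, map_zero, zero_mul, map_one, zero_add]
  have hplus : IsUnit (w5 + 1) := by
    rw [PowerSeries.isUnit_iff_constantCoeff]
    apply isUnit_of_sub_mem h2
    rw [map_add, map_one]
    have : constantCoeff w5 + 1 - 2 = constantCoeff w5 - 1 := by ring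
    rw [this]
    exact h5m
  have hw5one : w5 = 1 := by
    have h0 : (w5 - 1) * (w5 + 1) = 0 := by linear_combination hsq1
    exact sub_eq_zero.1 ((hplus.mul_left_eq_zero).1 h0)
  calc s5 = s5 * w5 := by rw [hw5one, mul_one]
    _ = X := h5w
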